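/- Let u = u₀ t_{i₁}^{α₁} u₁ ⋯ t_{i_ℓ}^{α_ℓ} u_ℓ and v = v₀ t_{j₁}^{β₁} v₁ ⋯ t_{j_m}^{β_m} v_m be reduced words. Suppose that for some k with 1 ≤ k ≤ min(ℓ,m) the word t_{i_{ℓ−k+1}}^{α_{ℓ−k+1}} u_{ℓ−k+1} ⋯ t_{i_ℓ}^{α_ℓ} u_ℓ v₀ t_{j₁}^{β₁} ⋯ v_{k−1} t_{j_k}^{β_k} represents in G an element of A_{i_{ℓ−k+1}}(α_{ℓ−k+1}) = A_{j_k}(−β_k). Then for every k′ with 1 ≤ k′ ≤ k one also has A_{i_{ℓ−k′+1}}(α_{ℓ−k′+1}) = A_{j_{k′}}(−β_{k′}) and the word t_{i_{ℓ−k′+1}}^{α_{ℓ−k′+1}} u_{ℓ−k′+1} ⋯ t_{i_ℓ}^{α_ℓ} u_ℓ v₀ t_{j₁}^{β₁} ⋯ v_{k′−1} t_{j_{k′}}^{β_{k′}} represents in G an element of A_{j_{k′}}(−β_{k′}). -/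

import Mathlib

/-!
Multiple HNN-extension `G = ⟨H, t₁, …, tₙ | tᵢ⁻¹ a tᵢ = φᵢ(a) (a ∈ Aᵢ)⟩`, presented
as a `PresentedGroup` on the alphabet `H ⊕ ι`.
-/

/-- Relators of the multiple HNN-extension presentation. -/
def hnnRels {H : Type*} [Group H] {ι : Type*} (A B : ι → Subgroup H)
    (φ : ∀ i, A i ≃* B i) : Set (FreeGroup (H ⊕ ι)) :=
  {r | ∃ h₁ h₂ : H, r = FreeGroup.of (Sum.inl h₁) * FreeGroup.of (Sum.inl h₂) *
        (FreeGroup.of (Sum.inl (h₁ * h₂)))⁻¹} ∪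
  {r | ∃ (i : ι) (a : A i), r = (FreeGroup.of (Sum.inr i))⁻¹ *
        FreeGroup.of (Sum.inl (a : H)) * FreeGroup.of (Sum.inr i) *
        (FreeGroup.of (Sum.inl ((φ i a : B i) : H)))⁻¹}

/-- The multiple HNN-extension of `H`. -/
abbrev MHNN {H : Type*} [Group H] {ι : Type*} (A B : ι → Subgroup H)
    (φ : ∀ i, A i ≃* B i) :=
  PresentedGroup (hnnRels A B φ)

/-- Canonical generators: `Sum.inl h` for `h ∈ H`, `Sum.inr i` for the stable letter `tᵢ`. -/
def gen {H : Type*} [Group H] {ι : Type*} (A B : ι → Subgroup H)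
    (φ : ∀ i, A i ≃* B i) (x : H ⊕ ι) : MHNN A B φ :=
  PresentedGroup.of x

/-- The element represented by the word `u₀ t_{idx 0}^{e 0} u₁ ⋯ t_{idx (ℓ-1)}^{e (ℓ-1)} u_ℓ`. -/
def wordProd {H : Type*} [Group H] {ι : Type*} (A B : ι → Subgroup H)
    (φ : ∀ i, A i ≃* B i) (ℓ : ℕ) (u : ℕ → H) (idx : ℕ → ι) (e : ℕ → ℤ) :
    MHNN A B φ :=
  gen A B φ (Sum.inl (u 0)) *
    ((List.range ℓ).map fun k =>
      gen A B φ (Sum.inr (idx k)) ^ e k * gen A B φ (Sum.inl (u (k + 1)))).prod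

/-- `side A B i e` is `A i (e)`, i.e. `A i` if `e = 1` and `B i` if `e = -1`. -/
def side {H : Type*} [Group H] {ι : Type*} (A B : ι → Subgroup H) (i : ι) (e : ℤ) :
    Subgroup H :=
  if e = 1 then A i else B i

/-- The word is reduced: exponents are `±1`, no factor `tᵢ^{-α} w tᵢ^{α}` with `w ∈ A i (α)`. -/
def ReducedWord {H : Type*} [Group H] {ι : Type*} (A B : ι → Subgroup H)
    (ℓ : ℕ) (u : ℕ → H) (idx : ℕ → ι) (e : ℕ → ℤ) : Prop :=
  (∀ k < ℓ, e k = 1 ∨ e k = -1) ∧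
  ∀ k, k + 1 < ℓ → idx k = idx (k + 1) → e k = -e (k + 1) →
    u (k + 1) ∉ side A B (idx k) (e (k + 1))

/-- The element of `G` represented by the "middle" word
`t_{i_{p-d+1}}^{α_{p-d+1}} u_{p-d+1} ⋯ t_{i_p}^{α_p} u_p v₀ t_{j_1}^{β_1} ⋯ v_{d-1} t_{j_d}^{β_d}`
(`0`-based: the last `d` stable letters of `u` together with `v₀ ⋯ v_{d-1}` and the first
`d` stable letters of `v`). -/
def midProd {H : Type*} [Group H] {ι : Type*} (A B : ι → Subgroup H)
    (φ : ∀ i, A i ≃* B i) (p : ℕ) (u : ℕ → H) (iu : ℕ → ι) (eu : ℕ → ℤ)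
    (v : ℕ → H) (iv : ℕ → ι) (ev : ℕ → ℤ) (d : ℕ) : MHNN A B φ :=
  ((List.range d).map fun k =>
      gen A B φ (Sum.inr (iu (p - d + k))) ^ eu (p - d + k) *
        gen A B φ (Sum.inl (u (p - d + k + 1)))).prod *
  ((List.range d).map fun k =>
      gen A B φ (Sum.inl (v k)) * gen A B φ (Sum.inr (iv k)) ^ ev k).prod

/-- The cancellation condition (a) ∧ (b) of the lemma, for a given `d ≥ 0`
(it holds trivially for `d = 0`). -/
def CancelCond {H : Type*} [Group H] {ι : Type*} (A B : ι → Subgroup H)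
    (φ : ∀ i, A i ≃* B i) (p q : ℕ) (u : ℕ → H) (iu : ℕ → ι) (eu : ℕ → ℤ)
    (v : ℕ → H) (iv : ℕ → ι) (ev : ℕ → ℤ) (d : ℕ) : Prop :=
  d = 0 ∨ (1 ≤ d ∧ d ≤ p ∧ d ≤ q ∧
    side A B (iu (p - d)) (eu (p - d)) = side A B (iv (d - 1)) (-(ev (d - 1))) ∧
    ∃ c ∈ side A B (iv (d - 1)) (-(ev (d - 1))),
      midProd A B φ p u iu eu v iv ev d = gen A B φ (Sum.inl c))


section MHNNL

open Subgroup

variable {H : Type*} [Group H] {ι : Type*} (A B : ι → Subgroup H) (φ : ∀ i, A i ≃* B i)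

namespace MHNNL

theorem rel_eq_one {r : FreeGroup (H ⊕ ι)} (hr : r ∈ hnnRels A B φ) :
    (QuotientGroup.mk r : MHNN A B φ) = 1 :=
  (QuotientGroup.eq_one_iff _).2 (Subgroup.subset_normalClosure hr)

theorem gen_inl_mul (h₁ h₂ : H) :
    gen A B φ (Sum.inl h₁) * gen A B φ (Sum.inl h₂) = gen A B φ (Sum.inl (h₁ * h₂)) := by
  have := rel_eq_one A B φ (r := FreeGroup.of (Sum.inl h₁) * FreeGroup.of (Sum.inl h₂) *
      (FreeGroup.of (Sum.inl (h₁ * h₂)))⁻¹) (Or.inl ⟨h₁, h₂, rfl⟩)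
  have h2 : (QuotientGroup.mk (FreeGroup.of (Sum.inl h₁) * FreeGroup.of (Sum.inl h₂) *
      (FreeGroup.of (Sum.inl (h₁ * h₂)))⁻¹ : FreeGroup (H ⊕ ι)) : MHNN A B φ) =
      gen A B φ (Sum.inl h₁) * gen A B φ (Sum.inl h₂) * (gen A B φ (Sum.inl (h₁ * h₂)))⁻¹ := rfl
  rw [h2] at this
  exact mul_inv_eq_one.1 this

/-- The canonical homomorphism `H →* MHNN A B φ`. -/
def ofHom : H →* MHNN A B φ :=
  MonoidHom.mk' (fun h => gen A B φ (Sum.inl h)) (fun h₁ h₂ => (gen_inl_mul A B φ h₁ h₂).symm)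

theorem ofHom_apply (h : H) : ofHom A B φ h = gen A B φ (Sum.inl h) := rfl

/-- The stable letters. -/
def tt (i : ι) : MHNN A B φ := gen A B φ (Sum.inr i)

theorem base_rel (i : ι) (a : A i) :
    (tt A B φ i)⁻¹ * ofHom A B φ (a : H) * tt A B φ i = ofHom A B φ ((φ i a : B i) : H) := by
  have := rel_eq_one A B φ (r := (FreeGroup.of (Sum.inr i))⁻¹ *
      FreeGroup.of (Sum.inl (a : H)) * FreeGroup.of (Sum.inr i) *
      (FreeGroup.of (Sum.inl ((φ i a : B i) : H)))⁻¹) (Or.inr ⟨i, a, rfl⟩)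
  have h2 : (QuotientGroup.mk ((FreeGroup.of (Sum.inr i))⁻¹ *
      FreeGroup.of (Sum.inl (a : H)) * FreeGroup.of (Sum.inr i) *
      (FreeGroup.of (Sum.inl ((φ i a : B i) : H)))⁻¹ : FreeGroup (H ⊕ ι)) : MHNN A B φ) =
      (tt A B φ i)⁻¹ * ofHom A B φ (a : H) * tt A B φ i *
        (ofHom A B φ ((φ i a : B i) : H))⁻¹ := rfl
  rw [h2] at this
  exact mul_inv_eq_one.1 this

/-- `toSub (i, u)` is the subgroup `S` with `tᵢ^u * s = τ(s) * tᵢ^u` for `s ∈ S`. -/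
def toSub (ε : ι × ℤˣ) : Subgroup H := if ε.2 = 1 then B ε.1 else A ε.1

@[simp] theorem toSub_one (i : ι) : toSub A B (i, 1) = B i := if_pos rfl

@[simp] theorem toSub_neg_one (i : ι) : toSub A B (i, -1) = A i := if_neg (show ¬((-1:ℤˣ) = 1) from by decide)

/-- Negation of a letter. -/
def nneg (ε : ι × ℤˣ) : ι × ℤˣ := (ε.1, -ε.2)

@[simp] theorem nneg_nneg (ε : ι × ℤˣ) : nneg (nneg ε) = ε := by simp [nneg]

/-- The isomorphism `toSub ε ≃* toSub (nneg ε)` implementing conjugation by `tᵢ^u`. -/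
def toEquiv (ε : ι × ℤˣ) : toSub A B ε ≃* toSub A B (nneg ε) :=
  if hu : ε.2 = 1 then
    (MulEquiv.subgroupCongr (by rw [show ε = (ε.1, ε.2) from rfl, hu, toSub_one])).trans
      (((φ ε.1).symm).trans (MulEquiv.subgroupCongr
        (by rw [show nneg ε = (ε.1, -ε.2) from rfl, hu, toSub_neg_one])))
  else
    have hu' : ε.2 = -1 := by rcases Int.units_eq_one_or ε.2 with h | h <;> simp_all
    (MulEquiv.subgroupCongr (by rw [show ε = (ε.1, ε.2) from rfl, hu', toSub_neg_one])).trans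
      ((φ ε.1).trans (MulEquiv.subgroupCongr
        (by rw [show nneg ε = (ε.1, -ε.2) from rfl, hu', neg_neg, toSub_one])))

theorem toEquiv_one_coe (i : ι) (s : toSub A B (i, 1)) :
    (toEquiv A B φ (i, 1) s : H) = ((φ i).symm ⟨(s : H), by simpa using s.2⟩ : A i) := by
  simp [toEquiv, MulEquiv.subgroupCongr]
  rfl

theorem toEquiv_neg_one_coe (i : ι) (s : toSub A B (i, -1)) :
    (toEquiv A B φ (i, -1) s : H) = ((φ i) ⟨(s : H), by simpa using s.2⟩ : B i) := by
  rw [toEquiv, dif_neg (show ¬((-1:ℤˣ) = 1) from by decide)]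
  rfl

@[simp]
theorem toEquiv_nneg_apply (ε : ι × ℤˣ) (a : toSub A B ε) :
    ((toEquiv A B φ (nneg ε) (toEquiv A B φ ε a)) : H) = a := by
  obtain ⟨i, u⟩ := ε
  rcases Int.units_eq_one_or u with rfl | rfl
  · erw [toEquiv_neg_one_coe]
    have h1 : (⟨((toEquiv A B φ (i, 1)) a : H), (toSub_neg_one A B i).le ((toEquiv A B φ (i, 1)) a).2⟩ : A i)
        = (φ i).symm ⟨(a : H), by simpa using a.2⟩ := Subtype.ext (by rw [toEquiv_one_coe])
    erw [h1, MulEquiv.apply_symm_apply]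
  · erw [toEquiv_one_coe]
    have h1 : (⟨((toEquiv A B φ (i, -1)) a : H), (toSub_one A B i).le ((toEquiv A B φ (i, -1)) a).2⟩ : B i)
        = (φ i) ⟨(a : H), by simpa using a.2⟩ := Subtype.ext (by rw [toEquiv_neg_one_coe])
    erw [h1, MulEquiv.symm_apply_apply]

@[simp]
theorem toEquiv_nneg_apply' (ε : ι × ℤˣ) (a : toSub A B ε)
    (hb : ((toEquiv A B φ ε a : toSub A B (nneg ε)) : H) ∈ toSub A B (nneg ε)) :
    ((toEquiv A B φ (nneg ε) ⟨((toEquiv A B φ ε a : toSub A B (nneg ε)) : H), hb⟩ :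
        toSub A B (nneg (nneg ε))) : H) = a := by
  have h : (⟨((toEquiv A B φ ε a : toSub A B (nneg ε)) : H), hb⟩ : toSub A B (nneg ε)) =
      toEquiv A B φ ε a := rfl
  rw [h, toEquiv_nneg_apply]

/-- `T ε = tᵢ ^ u`. -/
def T (ε : ι × ℤˣ) : MHNN A B φ := tt A B φ ε.1 ^ (ε.2 : ℤ)

@[simp] theorem T_nneg (ε : ι × ℤˣ) : T A B φ (nneg ε) = (T A B φ ε)⁻¹ := by
  simp [T, nneg, zpow_neg]

theorem T_mul_of (ε : ι × ℤˣ) (s : toSub A B ε) :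
    T A B φ ε * ofHom A B φ (s : H) =
      ofHom A B φ ((toEquiv A B φ ε s : toSub A B (nneg ε)) : H) * T A B φ ε := by
  obtain ⟨i, u⟩ := ε
  rcases Int.units_eq_one_or u with rfl | rfl
  · have hs : (s : H) ∈ B i := by simpa using s.2
    have := base_rel A B φ i ((φ i).symm ⟨s, hs⟩)
    rw [toEquiv_one_coe]
    simp only [MulEquiv.apply_symm_apply] at this
    have hT : T A B φ (i, (1:ℤˣ)) = tt A B φ i := by simp [T]
    rw [hT]
    rw [← this]
    group
  · have hs : (s : H) ∈ A i := by simpa using s.2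
    have := base_rel A B φ i ⟨s, hs⟩
    rw [toEquiv_neg_one_coe]
    have hT : T A B φ (i, (-1:ℤˣ)) = (tt A B φ i)⁻¹ := by simp [T]
    rw [hT, ← this]
    group

end MHNNL
end MHNNL
section Stage2
open Subgroup Function

variable {H : Type*} [Group H] {ι : Type*} (A B : ι → Subgroup H) (φ : ∀ i, A i ≃* B i)

namespace MHNNL

/-- A transversal for each subgroup `toSub ε`. -/
structure TP where
  set : ι × ℤˣ → Set H
  compl : ∀ ε, IsComplement (toSub A B ε : Set H) (set ε)

instance TP.instNonempty : Nonempty (TP A B) := by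
  choose t ht using fun ε => (toSub A B ε).exists_isComplement_right 1
  exact ⟨⟨t, fun ε => (ht ε).1⟩⟩

/-- Reduced words. -/
structure RW : Type _ where
  head : H
  toList : List ((ι × ℤˣ) × H)
  chain : toList.Chain' (fun a b => a.2 ∈ toSub A B a.1 → a.1.1 = b.1.1 → a.1.2 = b.1.2)

variable {A B} in
/-- The element of `MHNN A B φ` represented by a reduced word. -/
def RW.prod (w : RW A B) : MHNN A B φ :=
  ofHom A B φ w.head * (w.toList.map (fun x => T A B φ x.1 * ofHom A B φ x.2)).prod

variable {A B} in
/-- Normal words. -/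
structure NW (d : TP A B) extends RW A B : Type _ where
  mem_set : ∀ (ε : ι × ℤˣ) (g : H), (ε, g) ∈ toList → g ∈ d.set ε

variable {A B} {d : TP A B}

@[ext]
theorem NW.ext {w w' : NW d} (h1 : w.head = w'.head) (h2 : w.toList = w'.toList) : w = w' := by
  rcases w with ⟨⟨⟩, _⟩; cases w'; simp_all

/-- The empty word. -/
@[simps]
def NW.empty : NW d :=
  { head := 1, toList := [], mem_set := by simp, chain := List.isChain_nil }

/-- The word for an element of `H`. -/
@[simps]
def NW.ofGroup (g : H) : NW d :=
  { head := g, toList := [], mem_set := by simp, chain := List.isChain_nil }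

instance : Inhabited (NW d) := ⟨NW.empty⟩

instance : MulAction H (NW d) :=
  { smul := fun g w => { w with head := g * w.head }
    one_smul := fun w => NW.ext (one_mul w.head) rfl
    mul_smul := fun a b w => NW.ext (mul_assoc a b w.head) rfl }

theorem NW.group_smul_def (g : H) (w : NW d) : g • w = { w with head := g * w.head } := rfl

@[simp] theorem NW.group_smul_head (g : H) (w : NW d) : (g • w).head = g * w.head := rfl

@[simp] theorem NW.group_smul_toList (g : H) (w : NW d) : (g • w).toList = w.toList := rfl

namespace NW

/-- Prepend a letter and a group element to a normal word. -/
@[simps]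
def cons (g : H) (ε : ι × ℤˣ) (w : NW d) (h1 : w.head ∈ d.set ε)
    (h2 : ∀ ε' ∈ Option.map Prod.fst w.toList.head?,
      w.head ∈ toSub A B ε → ε.1 = ε'.1 → ε.2 = ε'.2) : NW d :=
  { head := g
    toList := (ε, w.head) :: w.toList
    mem_set := by
      intro ε' g' h'
      simp only [List.mem_cons, Prod.mk.injEq] at h'
      rcases h' with ⟨rfl, rfl⟩ | h'
      · exact h1
      · exact w.mem_set _ _ h'
    chain := by
      refine List.isChain_cons.2 ⟨?_, w.chain⟩
      rintro ⟨ε', g'⟩ hε' hw1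
      exact h2 _ (by simp_all) hw1 }

/-- Recursor for normal words. -/
@[elab_as_elim]
def consRecOn {motive : NW d → Sort*} (w : NW d)
    (ofGroup : ∀ g, motive (ofGroup g))
    (cons : ∀ (g : H) (ε : ι × ℤˣ) (w : NW d) (h1 : w.head ∈ d.set ε)
      (h2 : ∀ ε' ∈ Option.map Prod.fst w.toList.head?,
        w.head ∈ toSub A B ε → ε.1 = ε'.1 → ε.2 = ε'.2),
      motive w → motive (cons g ε w h1 h2)) : motive w := by
  rcases w with ⟨⟨g, l, chain⟩, mem_set⟩
  induction l generalizing g with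
  | nil => exact ofGroup _
  | cons a l ih =>
    exact cons g a.1
      { head := a.2
        toList := l
        mem_set := fun _ _ h => mem_set _ _ (List.mem_cons_of_mem _ h)
        chain := (List.isChain_cons.1 chain).2 }
      (mem_set a.1 a.2 List.mem_cons_self)
      (by simpa using (List.isChain_cons.1 chain).1)
      (ih _ _ _)

@[simp]
theorem consRecOn_ofGroup {motive : NW d → Sort*}
    (g : H) (ofGroup : ∀ g, motive (NW.ofGroup g))
    (cons : ∀ (g : H) (ε : ι × ℤˣ) (w : NW d) (h1 : w.head ∈ d.set ε)
      (h2 : ∀ ε' ∈ Option.map Prod.fst w.toList.head?,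
        w.head ∈ toSub A B ε → ε.1 = ε'.1 → ε.2 = ε'.2),
      motive w → motive (NW.cons g ε w h1 h2)) :
    consRecOn (NW.ofGroup g) ofGroup cons = ofGroup g := rfl

@[simp]
theorem consRecOn_cons {motive : NW d → Sort*}
    (g : H) (ε : ι × ℤˣ) (w : NW d) (h1 : w.head ∈ d.set ε)
    (h2 : ∀ ε' ∈ Option.map Prod.fst w.toList.head?,
      w.head ∈ toSub A B ε → ε.1 = ε'.1 → ε.2 = ε'.2)
    (ofGroup : ∀ g, motive (NW.ofGroup g))
    (cons : ∀ (g : H) (ε : ι × ℤˣ) (w : NW d) (h1 : w.head ∈ d.set ε)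
      (h2 : ∀ ε' ∈ Option.map Prod.fst w.toList.head?,
        w.head ∈ toSub A B ε → ε.1 = ε'.1 → ε.2 = ε'.2),
      motive w → motive (NW.cons g ε w h1 h2)) :
    consRecOn (NW.cons g ε w h1 h2) ofGroup cons =
      cons g ε w h1 h2 (consRecOn w ofGroup cons) := rfl

@[simp]
theorem smul_cons (g₁ g₂ : H) (ε : ι × ℤˣ) (w : NW d) (h1 : w.head ∈ d.set ε)
    (h2 : ∀ ε' ∈ Option.map Prod.fst w.toList.head?,
      w.head ∈ toSub A B ε → ε.1 = ε'.1 → ε.2 = ε'.2) :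
    g₁ • cons g₂ ε w h1 h2 = cons (g₁ * g₂) ε w h1 h2 := rfl

@[simp]
theorem smul_ofGroup (g₁ g₂ : H) : g₁ • (ofGroup g₂ : NW d) = ofGroup (g₁ * g₂) := rfl

variable (d)

/-- The action of `T ε` on an element of `H`. -/
noncomputable def unitsSMulGroup (ε : ι × ℤˣ) (g : H) :
    (toSub A B (nneg ε)) × d.set ε :=
  let g' := (d.compl ε).equiv g
  (toEquiv A B φ ε g'.1, g'.2)

theorem unitsSMulGroup_snd (ε : ι × ℤˣ) (g : H) :
    (unitsSMulGroup φ d ε g).2 = ((d.compl ε).equiv g).2 := rfl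

variable {d}

/-- `Cancels ε w` iff `T ε` cancels against the first letter of `w`. -/
def Cancels (ε : ι × ℤˣ) (w : NW d) : Prop :=
  (w.head ∈ (toSub A B ε : Subgroup H)) ∧ w.toList.head?.map Prod.fst = some (nneg ε)

/-- Multiplication by `T ε` in the case of cancellation. -/
def unitsSMulWithCancel (ε : ι × ℤˣ) (w : NW d) : Cancels ε w → NW d :=
  consRecOn (motive := fun w => Cancels ε w → NW d) w
    (fun _ can => absurd can.2 (by simp [ofGroup, Cancels]))
    (fun g _ w _ _ _ can =>
      ((toEquiv A B φ ε ⟨g, can.1⟩ : toSub A B (nneg ε)) : H) • w)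

theorem unitsSMul_aux1 (ε : ι × ℤˣ) (w : NW d) :
    ((((unitsSMulGroup φ d ε w.head).2 : H) * w.head⁻¹) • w).head ∈ d.set ε := by
  simp [unitsSMulGroup_snd]

theorem unitsSMul_aux2 (ε : ι × ℤˣ) (w : NW d) (h : ¬ Cancels ε w) :
    ∀ ε' ∈ Option.map Prod.fst ((((unitsSMulGroup φ d ε w.head).2 : H) * w.head⁻¹) • w).toList.head?,
      ((((unitsSMulGroup φ d ε w.head).2 : H) * w.head⁻¹) • w).head ∈ toSub A B ε →
        ε.1 = ε'.1 → ε.2 = ε'.2 := by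
  intro ε' hε' hmem hfst
  simp only [group_smul_toList, group_smul_head, inv_mul_cancel_right] at hmem hε'
  rw [unitsSMulGroup_snd] at hmem
  have hws : w.head ∈ toSub A B ε := by
    have := (d.compl ε).rightCosetEquivalence_equiv_snd w.head
    rw [RightCosetEquivalence, rightCoset_eq_iff, mul_mem_cancel_left hmem] at this
    simpa using this
  simp only [Cancels, not_and, hws, true_implies] at h
  by_contra hne
  apply h
  have h22 : ε'.2 = -ε.2 := by
    rcases Int.units_eq_one_or ε.2 with h1 | h1 <;>
      rcases Int.units_eq_one_or ε'.2 with h2 | h2 <;> simp_all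
  have hε'' : ε' = nneg ε := Prod.ext hfst.symm h22
  have hmm : Option.map Prod.fst w.toList.head? = some ε' := Option.mem_def.1 hε'
  rw [hmm, hε'']

/-- Multiplication by `T ε` on normal words. -/
noncomputable def unitsSMul (ε : ι × ℤˣ) (w : NW d) : NW d :=
  @dite _ (Cancels ε w) (Classical.dec _)
  (fun h => unitsSMulWithCancel φ ε w h)
  (fun h =>
    cons ((unitsSMulGroup φ d ε w.head).1 : H) ε
      ((((unitsSMulGroup φ d ε w.head).2 : H) * w.head⁻¹) • w)
      (unitsSMul_aux1 φ ε w) (unitsSMul_aux2 φ ε w h))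

theorem unitsSMul_def (ε : ι × ℤˣ) (w : NW d) :
    unitsSMul φ ε w = @dite _ (Cancels ε w) (Classical.dec _)
      (fun h => unitsSMulWithCancel φ ε w h)
      (fun h =>
        cons ((unitsSMulGroup φ d ε w.head).1 : H) ε
          ((((unitsSMulGroup φ d ε w.head).2 : H) * w.head⁻¹) • w)
          (unitsSMul_aux1 φ ε w) (unitsSMul_aux2 φ ε w h)) := rfl

theorem not_cancels_of_cons_hyp (ε : ι × ℤˣ) (w : NW d)
    (h2 : ∀ ε' ∈ Option.map Prod.fst w.toList.head?,
      w.head ∈ toSub A B ε → ε.1 = ε'.1 → ε.2 = ε'.2) :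
    ¬ Cancels ε w := by
  rintro ⟨hh, hl⟩
  have := h2 (nneg ε) (by rw [hl]; simp) hh rfl
  rcases Int.units_eq_one_or ε.2 with h1 | h1 <;> simp [nneg, h1] at this

theorem unitsSMul_cancels_iff (ε : ι × ℤˣ) (w : NW d) :
    Cancels (nneg ε) (unitsSMul φ ε w) ↔ ¬ Cancels ε w := by
  classical
  by_cases h : Cancels ε w
  · rw [unitsSMul_def, dif_pos h]
    simp only [h, not_true_eq_false, iff_false]
    induction w using consRecOn with
    | ofGroup => exact absurd h.2 (by simp [ofGroup, Cancels])
    | cons g ε' w h1 h2 _ =>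
      intro hc
      apply not_cancels_of_cons_hyp _ _ h2
      simp only [Cancels, cons_head, cons_toList, List.head?_cons,
        Option.map_some, Option.some.injEq] at h
      cases h.2
      simp only [unitsSMulWithCancel, consRecOn_cons] at hc
      refine ⟨?_, ?_⟩
      · have := hc.1
        simpa [Subgroup.mul_mem_cancel_left, nneg_nneg] using this
      · have := hc.2
        simpa [nneg_nneg] using this
  · rw [unitsSMul_def, dif_neg h]
    exact iff_of_true ⟨(unitsSMulGroup φ d ε w.head).1.2, by simp⟩ h

theorem unitsSMul_neg (ε : ι × ℤˣ) (w : NW d) :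
    unitsSMul φ (nneg ε) (unitsSMul φ ε w) = w := by
  classical
  rw [unitsSMul_def φ (nneg ε)]
  split_ifs with hcan
  · have hncan : ¬ Cancels ε w := (unitsSMul_cancels_iff φ _ _).1 hcan
    simp only [unitsSMul_def φ ε, dif_neg hncan]
    simp only [unitsSMulWithCancel, consRecOn_cons]
    refine NW.ext ?_ (by simp)
    · have heq := (d.compl ε).equiv_snd_eq_inv_mul w.head
      simp only [group_smul_head, cons_head, unitsSMulGroup, toEquiv_nneg_apply']
      rw [heq]
      group
  · have hcan2 : Cancels ε w := not_not.1 (mt (unitsSMul_cancels_iff φ _ _).2 hcan)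
    simp only [unitsSMul_def φ ε, dif_pos hcan2] at hcan ⊢
    cases w using consRecOn with
    | ofGroup => exact absurd hcan2.2 (by simp [ofGroup, Cancels])
    | cons g ε' w h1 h2 ih =>
      clear ih
      have hε' : ε' = nneg ε := by simpa using hcan2.2
      subst hε'
      have hg : g ∈ toSub A B ε := hcan2.1
      simp only [unitsSMulWithCancel, consRecOn_cons]
      have ha : ((toEquiv A B φ ε ⟨g, hg⟩ : toSub A B (nneg ε)) : H) ∈ toSub A B (nneg ε) :=
        (toEquiv A B φ ε ⟨g, hg⟩).2
      have hone : (1 : H) ∈ (toSub A B (nneg ε) : Set H) :=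
        SetLike.mem_coe.2 (Subgroup.one_mem _)
      have hfst := (d.compl (nneg ε)).equiv_fst_eq_one_of_mem_of_one_mem hone h1
      refine NW.ext ?_ ?_
      · simp only [cons_head, unitsSMulGroup, group_smul_head]
        rw [(d.compl (nneg ε)).equiv_mul_left_of_mem ha, hfst]
        simp only [map_mul, Subgroup.coe_mul]
        erw [toEquiv_nneg_apply']
        simp
      · simp only [cons_toList, group_smul_toList, group_smul_head]
        rw [unitsSMulGroup_snd, (d.compl (nneg ε)).equiv_mul_left_of_mem ha,
          (d.compl (nneg ε)).equiv_snd_eq_inv_mul, hfst]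
        simp [mul_assoc]

theorem unitsSMul_group_smul (ε : ι × ℤˣ) (s : toSub A B ε) (w : NW d) :
    unitsSMul φ ε ((s : H) • w) = ((toEquiv A B φ ε s : toSub A B (nneg ε)) : H) • unitsSMul φ ε w := by
  classical
  have hcaniff : Cancels ε ((s : H) • w) ↔ Cancels ε w := by
    unfold Cancels
    rw [group_smul_head, group_smul_toList, mul_mem_cancel_left s.2]
  rw [unitsSMul_def, unitsSMul_def]
  by_cases hcan : Cancels ε w
  · rw [dif_pos (hcaniff.2 hcan), dif_pos hcan]
    cases w using consRecOn with
    | ofGroup => exact absurd hcan.2 (by simp [ofGroup, Cancels])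
    | cons g ε' w h1 h2 _ =>
      simp only [smul_cons, unitsSMulWithCancel, consRecOn_cons]
      rw [← mul_smul]
      congr 1
      have h1' : ((s : H) * g) ∈ toSub A B ε := mul_mem s.2 hcan.1
      have : (⟨(s : H) * g, h1'⟩ : toSub A B ε) = s * ⟨g, hcan.1⟩ := rfl
      calc ((toEquiv A B φ ε ⟨(s : H) * g, (hcaniff.2 hcan).1⟩ : toSub A B (nneg ε)) : H)
          = ((toEquiv A B φ ε (s * ⟨g, hcan.1⟩) : toSub A B (nneg ε)) : H) := rfl
        _ = _ := by rw [map_mul]; simp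
  · rw [dif_neg (mt hcaniff.1 hcan), dif_neg hcan]
    refine NW.ext ?_ ?_
    · simp only [cons_head, smul_cons, unitsSMulGroup, group_smul_head]
      rw [(d.compl ε).equiv_mul_left_of_mem s.2]
      have hs : (⟨(s : H), s.2⟩ : toSub A B ε) = s := rfl
      rw [hs, map_mul]
      simp
    · simp only [cons_toList, smul_cons, unitsSMulGroup, group_smul_toList, group_smul_head]
      rw [(d.compl ε).equiv_mul_left_of_mem s.2, (d.compl ε).equiv_snd_eq_inv_mul]
      refine congrArg (· :: w.toList) ?_
      refine congrArg (Prod.mk ε) ?_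
      group

end NW

end MHNNL
end Stage2
section Stage3
open Subgroup Function

variable {H : Type*} [Group H] {ι : Type*} {A B : ι → Subgroup H} (φ : ∀ i, A i ≃* B i)

namespace MHNNL

@[elab_as_elim]
theorem induction_on {motive : MHNN A B φ → Prop} (x : MHNN A B φ)
    (one : motive 1) (genH : ∀ x, motive (gen A B φ x))
    (inv : ∀ x, motive x → motive x⁻¹)
    (mul : ∀ x y, motive x → motive y → motive (x * y)) : motive x := by
  obtain ⟨y, rfl⟩ := QuotientGroup.mk_surjective x
  induction y using FreeGroup.induction_on with
  | C1 => exact one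
  | of x => exact genH x
  | inv_of x ih => exact inv _ ih
  | mul x y ihx ihy => exact mul _ _ ihx ihy

namespace NW

variable {d : TP A B}

/-- The permutation given by left multiplication by `T ε`. -/
noncomputable def unitsPerm (ε : ι × ℤˣ) : Equiv.Perm (NW d) :=
  { toFun := unitsSMul φ ε
    invFun := unitsSMul φ (nneg ε)
    left_inv := fun w => unitsSMul_neg φ ε w
    right_inv := fun w => by
      have h := unitsSMul_neg φ (nneg ε) w
      rwa [nneg_nneg] at h }

@[simp] theorem unitsPerm_apply (ε : ι × ℤˣ) (w : NW d) :
    unitsPerm φ ε w = unitsSMul φ ε w := rfl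

@[simp] theorem unitsPerm_symm_apply (ε : ι × ℤˣ) (w : NW d) :
    (unitsPerm φ ε).symm w = unitsSMul φ (nneg ε) w := rfl

/-- The permutations attached to the generators. -/
noncomputable def genPerm (d : TP A B) : H ⊕ ι → Equiv.Perm (NW d)
  | Sum.inl h => MulAction.toPermHom H (NW d) h
  | Sum.inr i => unitsPerm φ (i, 1)

@[simp] theorem genPerm_inl (d : TP A B) (h : H) (w : NW d) :
    genPerm φ d (Sum.inl h) w = h • w := rfl

@[simp] theorem genPerm_inr (d : TP A B) (i : ι) (w : NW d) :
    genPerm φ d (Sum.inr i) w = unitsSMul φ (i, 1) w := rfl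

theorem unitsSMul_comm (i : ι) (a : A i) (w : NW d) :
    unitsSMul φ (i, 1) (((φ i a : B i) : H) • w) = (a : H) • unitsSMul φ (i, 1) w := by
  have hmem : ((φ i a : B i) : H) ∈ toSub A B (i, 1) := by rw [toSub_one]; exact (φ i a).2
  have h := unitsSMul_group_smul φ (i, 1) ⟨((φ i a : B i) : H), hmem⟩ w
  rw [h]
  congr 1
  rw [toEquiv_one_coe]
  have h2 : (⟨((φ i a : B i) : H), by simpa using hmem⟩ : B i) = φ i a := rfl
  rw [h2, MulEquiv.symm_apply_apply]

variable (d)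

theorem genPerm_inl_eq (d : TP A B) (h : H) :
    genPerm φ d (Sum.inl h) = MulAction.toPermHom H (NW d) h := rfl

theorem relsPerm : ∀ r ∈ hnnRels A B φ, FreeGroup.lift (genPerm φ d) r = 1 := by
  rintro r (⟨h₁, h₂, rfl⟩ | ⟨i, a, rfl⟩)
  · simp only [map_mul, map_inv, FreeGroup.lift_apply_of]
    rw [genPerm_inl_eq, genPerm_inl_eq, genPerm_inl_eq, ← map_mul, mul_inv_cancel]
  · simp only [map_mul, map_inv, FreeGroup.lift_apply_of]
    rw [mul_inv_eq_one]
    have hcomm : genPerm φ d (Sum.inl ((a : A i) : H)) * genPerm φ d (Sum.inr i) =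
        genPerm φ d (Sum.inr i) * genPerm φ d (Sum.inl ((φ i a : B i) : H)) := by
      refine Equiv.ext fun w => ?_
      simp only [Equiv.Perm.mul_apply, genPerm_inl, genPerm_inr]
      exact (unitsSMul_comm φ i a w).symm
    rw [mul_assoc, hcomm, ← mul_assoc, inv_mul_cancel, one_mul]

/-- The action of `MHNN A B φ` on normal words, as a homomorphism to permutations. -/
noncomputable def toPerm : MHNN A B φ →* Equiv.Perm (NW d) :=
  PresentedGroup.toGroup (relsPerm φ d)

theorem toPerm_gen (x : H ⊕ ι) :
    toPerm φ d (gen A B φ x) = genPerm φ d x :=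
  PresentedGroup.toGroup.of (relsPerm φ d)

theorem toPerm_ofHom (h : H) (w : NW d) : toPerm φ d (ofHom A B φ h) w = h • w := by
  rw [ofHom_apply, toPerm_gen]
  rfl

theorem toPerm_T (ε : ι × ℤˣ) (w : NW d) :
    toPerm φ d (T A B φ ε) w = unitsSMul φ ε w := by
  obtain ⟨i, u⟩ := ε
  rcases Int.units_eq_one_or u with rfl | rfl
  · have h : T A B φ (i, 1) = gen A B φ (Sum.inr i) := by simp [T, tt]
    rw [h, toPerm_gen]
    rfl
  · have h : T A B φ (i, -1) = (gen A B φ (Sum.inr i))⁻¹ := by simp [T, tt]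
    rw [h, map_inv, toPerm_gen]
    rfl

/-- The product of a normal word. -/
def prod (w : NW d) : MHNN A B φ :=
  ofHom A B φ w.head * (w.toList.map (fun x => T A B φ x.1 * ofHom A B φ x.2)).prod

variable {d}

theorem prod_toRW (w : NW d) : prod φ d w = RW.prod φ w.toRW := rfl

@[simp] theorem prod_group_smul (g : H) (w : NW d) :
    prod φ d (g • w) = ofHom A B φ g * prod φ d w := by
  simp [prod, map_mul, mul_assoc]

@[simp] theorem prod_empty : prod φ d (NW.empty : NW d) = 1 := by
  simp [prod, NW.empty]

@[simp] theorem prod_ofGroup (g : H) : prod φ d (NW.ofGroup g : NW d) = ofHom A B φ g := by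
  simp [prod, NW.ofGroup]

@[simp] theorem prod_cons (g : H) (ε : ι × ℤˣ) (w : NW d) (h1 : w.head ∈ d.set ε)
    (h2 : ∀ ε' ∈ Option.map Prod.fst w.toList.head?,
      w.head ∈ toSub A B ε → ε.1 = ε'.1 → ε.2 = ε'.2) :
    prod φ d (cons g ε w h1 h2) = ofHom A B φ g * (T A B φ ε * prod φ d w) := by
  simp [prod, cons, mul_assoc]

theorem prod_unitsSMul (ε : ι × ℤˣ) (w : NW d) :
    prod φ d (unitsSMul φ ε w) = T A B φ ε * prod φ d w := by
  rw [unitsSMul_def]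
  split_ifs with hcan
  · cases w using consRecOn with
    | ofGroup => exact absurd hcan.2 (by simp [ofGroup, Cancels])
    | cons g ε' w h1 h2 _ =>
      have hε' : ε' = nneg ε := by simpa using hcan.2
      subst hε'
      simp only [unitsSMulWithCancel, consRecOn_cons, prod_group_smul, prod_cons]
      rw [← mul_assoc (T A B φ ε), T_mul_of A B φ ε ⟨g, hcan.1⟩]
      rw [T_nneg]
      group
  · simp only [prod_cons, prod_group_smul, unitsSMulGroup]
    rw [(d.compl ε).equiv_snd_eq_inv_mul]
    rw [← mul_assoc, ← T_mul_of A B φ ε]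
    simp only [map_mul, map_inv]
    group

theorem prod_toPerm (g : MHNN A B φ) (w : NW d) :
    prod φ d (toPerm φ d g w) = g * prod φ d w := by
  induction g using induction_on generalizing w with
  | one => simp
  | genH x =>
    rcases x with h | i
    · rw [toPerm_gen, genPerm_inl, prod_group_smul, ofHom_apply]
    · rw [toPerm_gen, genPerm_inr, prod_unitsSMul]
      have h : T A B φ (i, 1) = gen A B φ (Sum.inr i) := by simp [T, tt]
      rw [h]
  | inv x ih =>
    have h1 : toPerm φ d x (toPerm φ d x⁻¹ w) = w := by
      rw [← Equiv.Perm.mul_apply, ← map_mul]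
      simp
    have h2 := ih (toPerm φ d x⁻¹ w)
    rw [h1] at h2
    exact eq_inv_mul_iff_mul_eq.2 h2.symm
  | mul x y ihx ihy =>
    rw [map_mul, Equiv.Perm.mul_apply, ihx, ihy, mul_assoc]

theorem prod_toPerm_empty (w : NW d) : toPerm φ d (prod φ d w) NW.empty = w := by
  induction w using consRecOn with
  | ofGroup g =>
    rw [prod_ofGroup, toPerm_ofHom]
    refine NW.ext ?_ ?_ <;> simp [NW.ofGroup, NW.empty]
  | cons g ε w h1 h2 ih =>
    rw [prod_cons, map_mul, map_mul, Equiv.Perm.mul_apply, Equiv.Perm.mul_apply, ih,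
      toPerm_T, toPerm_ofHom]
    rw [unitsSMul_def, dif_neg (not_cancels_of_cons_hyp ε w h2)]
    have hone : (1 : H) ∈ (toSub A B ε : Set H) := SetLike.mem_coe.2 (Subgroup.one_mem _)
    have hfst := (d.compl ε).equiv_fst_eq_one_of_mem_of_one_mem hone h1
    refine NW.ext ?_ ?_
    · simp only [smul_cons, cons_head, unitsSMulGroup, hfst]
      have h1' : (⟨1, hone⟩ : (toSub A B ε : Set H)) = (1 : toSub A B ε) := rfl
      rw [h1', map_one]
      simp
    · simp only [smul_cons, cons_toList, group_smul_toList, group_smul_head]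
      rw [unitsSMulGroup_snd, (d.compl ε).equiv_snd_eq_inv_mul, hfst]
      have h1' : ((⟨1, hone⟩ : (toSub A B ε : Set H)) : H) = 1 := rfl
      rw [h1']
      simp

variable (d)

theorem prod_injective : Function.Injective (prod φ d : NW d → MHNN A B φ) := by
  have hli : Function.LeftInverse (fun g => toPerm φ d g NW.empty) (prod φ d) :=
    fun w => prod_toPerm_empty φ w
  exact hli.injective

end NW

open NW

theorem exists_nw_prod_eq (d : TP A B) (w : RW A B) :
    ∃ w' : NW d, NW.prod φ d w' = RW.prod φ w ∧
      w'.toList.map Prod.fst = w.toList.map Prod.fst ∧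
      ∀ ε ∈ w.toList.head?.map Prod.fst, w'.head⁻¹ * w.head ∈ toSub A B (nneg ε) := by
  suffices h : ∀ w : RW A B, w.head = 1 → ∃ w' : NW d, NW.prod φ d w' = RW.prod φ w ∧
      w'.toList.map Prod.fst = w.toList.map Prod.fst ∧
      ∀ ε ∈ w.toList.head?.map Prod.fst, w'.head ∈ toSub A B (nneg ε) by
    by_cases hw1 : w.head = 1
    · rcases h w hw1 with ⟨w', hw1', hw2', hw3'⟩
      exact ⟨w', hw1', hw2', fun ε hε => by
        rw [hw1, mul_one]
        exact inv_mem (hw3' ε hε)⟩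
    · rcases h ⟨1, w.toList, w.chain⟩ rfl with ⟨w', hw1', hw2', hw3'⟩
      refine ⟨w.head • w', ?_, ?_, ?_⟩
      · rw [NW.prod_group_smul, hw1']
        simp [RW.prod, mul_assoc]
      · simpa using hw2'
      · intro ε hε
        simp only [NW.group_smul_head, mul_inv_rev]
        rw [mul_assoc, inv_mul_cancel, mul_one]
        exact inv_mem (hw3' ε hε)
  intro w hw1
  rcases w with ⟨g, l, chain⟩
  dsimp at hw1; subst hw1
  induction l with
  | nil => exact ⟨NW.empty, by simp [RW.prod], by simp, by simp⟩
  | cons a l ih =>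
    rcases ih ((List.isChain_cons.1 chain).2) with ⟨w', hw'1, hw'2, hw'3⟩
    have hnc : ¬ Cancels a.1 (a.2 • w') := by
      rintro ⟨hc1, hc2⟩
      simp only [NW.group_smul_toList] at hc2
      rcases hl : l with _ | ⟨b, l'⟩
      · subst hl
        simp only [List.map_nil, List.map_eq_nil_iff] at hw'2
        rw [hw'2] at hc2
        simp at hc2
      · subst hl
        have hbl : w'.toList.head?.map Prod.fst = some b.1 := by
          rw [← List.head?_map, hw'2]
          simp
        rw [hbl] at hc2
        have hb1 : b.1 = nneg a.1 := by simpa using hc2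
        have hwh : w'.head ∈ toSub A B (nneg b.1) := by
          apply hw'3
          simp
        rw [hb1, nneg_nneg] at hwh
        simp only [NW.group_smul_head] at hc1
        rw [mul_mem_cancel_right hwh] at hc1
        have hchain := (List.isChain_cons.1 chain).1 b (by simp) hc1
        have : a.1.2 = b.1.2 := hchain (by rw [hb1]; rfl)
        rw [hb1] at this
        rcases Int.units_eq_one_or a.1.2 with h1 | h1 <;> simp [nneg, h1] at this
    refine ⟨toPerm φ d (T A B φ a.1 * ofHom A B φ a.2) w', ?_, ?_, ?_⟩
    · rw [NW.prod_toPerm, hw'1]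
      simp [RW.prod, mul_assoc]
    · rw [map_mul, Equiv.Perm.mul_apply, toPerm_T, toPerm_ofHom,
        unitsSMul_def, dif_neg hnc]
      simp only [NW.cons_toList, NW.group_smul_toList, List.map_cons]
      rw [hw'2]
    · intro ε hε
      simp only [List.head?_cons, Option.map_some, Option.mem_def, Option.some.injEq] at hε
      subst hε
      rw [map_mul, Equiv.Perm.mul_apply, toPerm_T, toPerm_ofHom,
        unitsSMul_def, dif_neg hnc]
      simp only [NW.cons_head]
      exact (unitsSMulGroup φ d a.1 ((a.2 • w').head)).1.2

theorem map_fst_eq_of_prod_eq {w₁ w₂ : RW A B} (h : RW.prod φ w₁ = RW.prod φ w₂) :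
    w₁.toList.map Prod.fst = w₂.toList.map Prod.fst := by
  rcases TP.instNonempty A B with ⟨d⟩
  rcases exists_nw_prod_eq φ d w₁ with ⟨w₁', h1, h2, _⟩
  rcases exists_nw_prod_eq φ d w₂ with ⟨w₂', h1', h2', _⟩
  have heq : w₁' = w₂' := NW.prod_injective φ d (by rw [h1, h1', h])
  rw [← h2, ← h2', heq]

/-- Britton's lemma for the multiple HNN extension. -/
theorem britton (w : RW A B) (h : ∃ g : H, RW.prod φ w = ofHom A B φ g) :
    w.toList = [] := by
  rcases h with ⟨g, hg⟩
  have heq : RW.prod φ w = RW.prod φ ⟨g, [], List.isChain_nil⟩ := by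
    rw [hg]
    simp [RW.prod]
  simpa using map_fst_eq_of_prod_eq φ heq

end MHNNL
end Stage3
section Stage4
open Subgroup

variable {H : Type*} [Group H] {ι : Type*} (A B : ι → Subgroup H) (φ : ∀ i, A i ≃* B i)

namespace MHNNL

/-- `ℤ → ℤˣ` for `±1`. -/
def toU (e : ℤ) : ℤˣ := if e = 1 then 1 else -1

theorem toU_coe {e : ℤ} (he : e = 1 ∨ e = -1) : ((toU e : ℤˣ) : ℤ) = e := by
  rcases he with rfl | rfl <;> simp [toU]

theorem toU_ne {e e' : ℤ} (he : e = 1 ∨ e = -1) (he' : e' = 1 ∨ e' = -1)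
    (h : toU e ≠ toU e') : e = -e' := by
  rcases he with rfl | rfl <;> rcases he' with rfl | rfl <;> simp [toU] at h ⊢

theorem T_eq (i : ι) {e : ℤ} (he : e = 1 ∨ e = -1) :
    T A B φ (i, toU e) = gen A B φ (Sum.inr i) ^ e := by
  rw [T]
  simp only [tt]
  rw [toU_coe he]

theorem toSub_toU (i : ι) {e : ℤ} (he : e = 1 ∨ e = -1) :
    toSub A B (i, toU e) = side A B i (-e) := by
  rcases he with rfl | rfl
  · rw [show toU 1 = 1 from rfl, toSub_one, side]
    norm_num
  · rw [show toU (-1) = -1 from rfl, toSub_neg_one, side]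
    norm_num

theorem toSub_nneg_toU (i : ι) {e : ℤ} (he : e = 1 ∨ e = -1) :
    toSub A B (nneg (i, toU e)) = side A B i e := by
  rcases he with rfl | rfl
  · rw [show nneg (i, toU 1) = (i, -1) from rfl, toSub_neg_one, side]
    norm_num
  · rw [show nneg (i, toU (-1)) = (i, 1) from rfl, toSub_one, side]
    norm_num

/-- Partial products of the `u`-side. -/
def midL (u : ℕ → H) (iu : ℕ → ι) (eu : ℕ → ℤ) (b d : ℕ) : MHNN A B φ :=
  ((List.range d).map fun s => gen A B φ (Sum.inr (iu (b + s))) ^ eu (b + s) *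
    gen A B φ (Sum.inl (u (b + s + 1)))).prod

/-- Partial products of the `v`-side. -/
def midR (v : ℕ → H) (iv : ℕ → ι) (ev : ℕ → ℤ) (b d : ℕ) : MHNN A B φ :=
  ((List.range d).map fun r => gen A B φ (Sum.inl (v (b + r))) *
    gen A B φ (Sum.inr (iv (b + r))) ^ ev (b + r)).prod

theorem midProd_eq (p d : ℕ) (u v : ℕ → H) (iu iv : ℕ → ι) (eu ev : ℕ → ℤ) :
    midProd A B φ p u iu eu v iv ev d =
      midL A B φ u iu eu (p - d) d * midR A B φ v iv ev 0 d := by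
  unfold midProd midL midR
  congr 1
  refine congrArg List.prod (List.map_congr_left fun r _ => ?_)
  simp

theorem midL_append (u : ℕ → H) (iu : ℕ → ι) (eu : ℕ → ℤ) (b d₁ d₂ : ℕ) :
    midL A B φ u iu eu b (d₁ + d₂) =
      midL A B φ u iu eu b d₁ * midL A B φ u iu eu (b + d₁) d₂ := by
  unfold midL
  rw [List.range_add, List.map_append, List.prod_append, List.map_map]
  congr 1
  refine congrArg List.prod (List.map_congr_left fun s _ => ?_)
  simp only [Function.comp_apply]
  rw [show b + (d₁ + s) = b + d₁ + s from by omega]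

theorem midR_append (v : ℕ → H) (iv : ℕ → ι) (ev : ℕ → ℤ) (b d₁ d₂ : ℕ) :
    midR A B φ v iv ev b (d₁ + d₂) =
      midR A B φ v iv ev b d₁ * midR A B φ v iv ev (b + d₁) d₂ := by
  unfold midR
  rw [List.range_add, List.map_append, List.prod_append, List.map_map]
  congr 1
  refine congrArg List.prod (List.map_congr_left fun s _ => ?_)
  simp only [Function.comp_apply]
  rw [show b + (d₁ + s) = b + d₁ + s from by omega]

theorem midL_one (u : ℕ → H) (iu : ℕ → ι) (eu : ℕ → ℤ) (b : ℕ) :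
    midL A B φ u iu eu b 1 =
      gen A B φ (Sum.inr (iu b)) ^ eu b * gen A B φ (Sum.inl (u (b + 1))) := by
  rw [midL, show List.range 1 = [0] from rfl]
  simp

theorem midR_one (v : ℕ → H) (iv : ℕ → ι) (ev : ℕ → ℤ) (b : ℕ) :
    midR A B φ v iv ev b 1 =
      gen A B φ (Sum.inl (v b)) * gen A B φ (Sum.inr (iv b)) ^ ev b := by
  rw [midR, show List.range 1 = [0] from rfl]
  simp

theorem prod_shift (F G : ℕ → MHNN A B φ) (n : ℕ) :
    ((List.range n).map (fun r => F r * G r)).prod * F n =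
      F 0 * ((List.range n).map (fun r => G r * F (r + 1))).prod := by
  induction n with
  | zero => simp
  | succ n ih =>
    rw [List.range_succ]
    simp only [List.map_append, List.prod_append, List.map_cons, List.map_nil,
      List.prod_cons, List.prod_nil, mul_one]
    have hre : ∀ a b c e : MHNN A B φ, a * (b * c) * e = a * b * (c * e) := by
      intros; group
    rw [hre, ih, mul_assoc]

end MHNNL
end Stage4
section Stage5
open Subgroup

variable {H : Type*} [Group H] {ι : Type*} (A B : ι → Subgroup H) (φ : ∀ i, A i ≃* B i)

namespace MHNNL

theorem chainstep (i i' : ι) (e e' : ℤ) (x : H) (he : e = 1 ∨ e = -1) (he' : e' = 1 ∨ e' = -1)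
    (hred : i = i' → e = -e' → x ∉ side A B i e') :
    x ∈ toSub A B (i, toU e) → i = i' → toU e = toU e' := by
  intro hx hii
  by_contra hne
  have hee : e = -e' := toU_ne he he' hne
  apply hred hii hee
  rw [toSub_toU A B i he] at hx
  rwa [show (-e) = e' from by omega] at hx

/-- The letters of the `u`-part of the test word, with the junction element at position `n`. -/
def W1 {H : Type*} {ι : Type*} (iu : ℕ → ι) (eu : ℕ → ℤ) (u : ℕ → H) (g : H) (b n s : ℕ) :
    (ι × ℤˣ) × H :=
  ((iu (b + s), toU (eu (b + s))), if s = n then g else u (b + s + 1))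

/-- The letters of the `v`-part of the test word, with a trailing `1` at position `n`. -/
def W2 {H : Type*} [Group H] {ι : Type*} (iv : ℕ → ι) (ev : ℕ → ℤ) (v : ℕ → H) (jj n r : ℕ) :
    (ι × ℤˣ) × H :=
  ((iv (jj + r), toU (ev (jj + r))), if r = n then (1 : H) else v (jj + r + 1))

theorem step (ℓ m : ℕ) (u v : ℕ → H) (iu iv : ℕ → ι) (eu ev : ℕ → ℤ)
    (hu : ReducedWord A B ℓ u iu eu) (hv : ReducedWord A B m v iv ev)
    (j n : ℕ) (hkl : j + 1 + n ≤ ℓ) (hkm : j + 1 + n ≤ m)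
    (c : H) (hc : midProd A B φ ℓ u iu eu v iv ev (j + 1 + n) = gen A B φ (Sum.inl c))
    (c' : H) (hc' : midProd A B φ ℓ u iu eu v iv ev j = gen A B φ (Sum.inl c')) :
    iu (ℓ - j - 1) = iv j ∧ eu (ℓ - j - 1) = -ev j ∧
      ∃ c'' ∈ side A B (iv j) (-ev j),
        midProd A B φ ℓ u iu eu v iv ev (j + 1) = gen A B φ (Sum.inl c'') := by
  have heu : ∀ s, s ≤ n → (eu (ℓ - (j+1+n) + s) = 1 ∨ eu (ℓ - (j+1+n) + s) = -1) :=
    fun s hs => hu.1 _ (by omega)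
  have hev : ∀ r, r ≤ n → (ev (j + r) = 1 ∨ ev (j + r) = -1) :=
    fun r hr => hv.1 _ (by omega)
  have hb1 : ℓ - (j+1+n) + n = ℓ - j - 1 := by omega
  have hb2 : ℓ - j - 1 + 1 = ℓ - j := by omega
  have h3 : midL A B φ u iu eu (ℓ-j) j * midR A B φ v iv ev 0 j = ofHom A B φ c' := by
    rw [← midProd_eq, hc', ofHom_apply]
  have h3' : midR A B φ v iv ev 0 j =
      (midL A B φ u iu eu (ℓ-j) j)⁻¹ * ofHom A B φ c' := by
    rw [← h3]; group
  have hL : midL A B φ u iu eu (ℓ-(j+1+n)) (j+1+n) =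
      midL A B φ u iu eu (ℓ-(j+1+n)) n *
        (midL A B φ u iu eu (ℓ-j-1) 1 * midL A B φ u iu eu (ℓ-j) j) := by
    have h0 : midL A B φ u iu eu (ℓ-(j+1+n)) (j+1+n) =
        midL A B φ u iu eu (ℓ-(j+1+n)) (n+(1+j)) := by
      rw [show n+(1+j) = j+1+n from by omega]
    rw [h0, midL_append, midL_append, hb1, hb2]
  have hR : midR A B φ v iv ev 0 (j+1+n) =
      midR A B φ v iv ev 0 j * (midR A B φ v iv ev j 1 * midR A B φ v iv ev (j+1) n) := by
    have h0 : midR A B φ v iv ev 0 (j+1+n) = midR A B φ v iv ev 0 (j+(1+n)) := by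
      rw [show j+(1+n) = j+1+n from by omega]
    rw [h0, midR_append, midR_append, show (0:ℕ)+j = j from by omega]
  have hA : midProd A B φ ℓ u iu eu v iv ev (j+1+n) =
      midL A B φ u iu eu (ℓ-(j+1+n)) n *
        (gen A B φ (Sum.inr (iu (ℓ-j-1))) ^ eu (ℓ-j-1) *
          ofHom A B φ (u (ℓ-j) * c' * v j)) *
        (gen A B φ (Sum.inr (iv j)) ^ ev j * midR A B φ v iv ev (j+1) n) := by
    rw [midProd_eq, hL, hR, midL_one, midR_one, hb2, h3']
    simp only [map_mul, ← ofHom_apply]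
    group
  have hF1 : (((List.range (n+1)).map (W1 iu eu u (u (ℓ-j) * c' * v j) (ℓ-(j+1+n)) n)).map
      (fun x => T A B φ x.1 * ofHom A B φ x.2)).prod =
      midL A B φ u iu eu (ℓ-(j+1+n)) n *
        (gen A B φ (Sum.inr (iu (ℓ-j-1))) ^ eu (ℓ-j-1) *
          ofHom A B φ (u (ℓ-j) * c' * v j)) := by
    rw [List.map_map, List.range_succ, List.map_append, List.prod_append]
    congr 1
    · rw [midL]
      refine congrArg List.prod (List.map_congr_left fun s hs => ?_)
      have hs' : s < n := List.mem_range.1 hs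
      simp only [Function.comp_apply, W1]
      rw [if_neg (by omega), T_eq A B φ _ (heu s (by omega)), ofHom_apply]
    · simp only [List.map_cons, List.map_nil, List.prod_cons, List.prod_nil, mul_one,
        Function.comp_apply, W1]
      rw [if_pos trivial, T_eq A B φ _ (heu n le_rfl), hb1]
  have hF2 : (((List.range (n+1)).map (W2 iv ev v j n)).map
      (fun x => T A B φ x.1 * ofHom A B φ x.2)).prod =
      gen A B φ (Sum.inr (iv j)) ^ ev j * midR A B φ v iv ev (j+1) n := by
    rw [List.map_map, List.range_succ, List.map_append, List.prod_append]
    have hmid : (List.range n).map ((fun x => T A B φ x.1 * ofHom A B φ x.2) ∘ (W2 iv ev v j n)) =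
        (List.range n).map (fun r => gen A B φ (Sum.inr (iv (j+r))) ^ ev (j+r) *
          ofHom A B φ (v (j+r+1))) := by
      refine List.map_congr_left fun r hr => ?_
      have hr' : r < n := List.mem_range.1 hr
      simp only [Function.comp_apply, W2]
      rw [if_neg (by omega), T_eq A B φ _ (hev r (by omega))]
    have hlast : (List.map ((fun x => T A B φ x.1 * ofHom A B φ x.2) ∘ (W2 iv ev v j n)) [n]).prod =
        gen A B φ (Sum.inr (iv (j+n))) ^ ev (j+n) := by
      simp only [List.map_cons, List.map_nil, List.prod_cons, List.prod_nil, mul_one,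
        Function.comp_apply, W2, eq_self_iff_true, if_true]
      rw [T_eq A B φ _ (hev n le_rfl), map_one, mul_one]
    rw [hmid, hlast,
      prod_shift A B φ (fun r => gen A B φ (Sum.inr (iv (j+r))) ^ ev (j+r))
        (fun r => ofHom A B φ (v (j+r+1))) n]
    congr 1
    rw [midR]
    refine congrArg List.prod (List.map_congr_left fun r hr => ?_)
    rw [ofHom_apply, show j+(r+1) = j+1+r from by omega, show j+r+1 = j+1+r from by omega]
  by_cases hjl : (u (ℓ-j) * c' * v j) ∈ toSub A B (iu (ℓ-j-1), toU (eu (ℓ-j-1))) →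
      iu (ℓ-j-1) = iv j → toU (eu (ℓ-j-1)) = toU (ev j)
  · exfalso
    have hch1 : List.Chain' (fun a b => a.2 ∈ toSub A B a.1 → a.1.1 = b.1.1 → a.1.2 = b.1.2)
        ((List.range (n+1)).map (W1 iu eu u (u (ℓ-j) * c' * v j) (ℓ-(j+1+n)) n)) := by
      unfold List.Chain'
      rw [List.isChain_map, List.isChain_range_succ]
      intro s hs
      simp only [W1]
      rw [if_neg (show ¬ s = n from by omega)]
      intro hx hii
      exact chainstep A B _ _ _ _ _ (heu s (by omega)) (heu (s+1) (by omega))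
        (fun h1 h2 => hu.2 (ℓ-(j+1+n)+s) (by omega) h1 h2) hx hii
    have hch2 : List.Chain' (fun a b => a.2 ∈ toSub A B a.1 → a.1.1 = b.1.1 → a.1.2 = b.1.2)
        ((List.range (n+1)).map (W2 iv ev v j n)) := by
      unfold List.Chain'
      rw [List.isChain_map, List.isChain_range_succ]
      intro r hr
      simp only [W2]
      rw [if_neg (show ¬ r = n from by omega)]
      intro hx hii
      exact chainstep A B _ _ _ _ _ (hev r (by omega)) (hev (r+1) (by omega))
        (fun h1 h2 => hv.2 (j+r) (by omega) h1 h2) hx hii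
    have hlink : ∀ x ∈ ((List.range (n+1)).map
          (W1 iu eu u (u (ℓ-j) * c' * v j) (ℓ-(j+1+n)) n)).getLast?,
        ∀ y ∈ ((List.range (n+1)).map (W2 iv ev v j n)).head?,
        (x.2 ∈ toSub A B x.1 → x.1.1 = y.1.1 → x.1.2 = y.1.2) := by
      intro x hx y hy
      have hx' : x = W1 iu eu u (u (ℓ-j) * c' * v j) (ℓ-(j+1+n)) n n := by
        rw [List.range_succ, List.map_append] at hx
        simp only [List.map_cons, List.map_nil, List.getLast?_concat, Option.mem_def,
          Option.some.injEq] at hx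
        exact hx.symm
      have hy' : y = W2 iv ev v j n 0 := by
        rw [List.range_succ_eq_map] at hy
        simp only [List.map_cons, List.head?_cons, Option.mem_def, Option.some.injEq] at hy
        exact hy.symm
      subst hx'; subst hy'
      simp only [W1, W2, eq_self_iff_true, if_true]
      rw [hb1]
      intro hmem hii
      exact hjl hmem hii
    have hchain : List.Chain' (fun a b => a.2 ∈ toSub A B a.1 → a.1.1 = b.1.1 → a.1.2 = b.1.2)
        (((List.range (n+1)).map (W1 iu eu u (u (ℓ-j) * c' * v j) (ℓ-(j+1+n)) n)) ++
          ((List.range (n+1)).map (W2 iv ev v j n))) :=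
      List.isChain_append.2 ⟨hch1, hch2, hlink⟩
    have hb := britton φ (⟨(1 : H), _, hchain⟩ : RW A B) ⟨c, ?_⟩
    · simp only [List.append_eq_nil_iff, List.map_eq_nil_iff, List.range_eq_nil] at hb
      omega
    · show ofHom A B φ 1 * ((((List.range (n+1)).map
          (W1 iu eu u (u (ℓ-j) * c' * v j) (ℓ-(j+1+n)) n)) ++
          ((List.range (n+1)).map (W2 iv ev v j n))).map
            (fun x => T A B φ x.1 * ofHom A B φ x.2)).prod = ofHom A B φ c
      rw [map_one, one_mul, List.map_append, List.prod_append, hF1, hF2, ← hA, hc, ofHom_apply]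
  · push_neg at hjl
    obtain ⟨hmem, hii, hne⟩ := hjl
    have heu' : eu (ℓ-j-1) = 1 ∨ eu (ℓ-j-1) = -1 := hu.1 _ (by omega)
    have hev' : ev j = 1 ∨ ev j = -1 := hv.1 _ (by omega)
    have hee : eu (ℓ-j-1) = -ev j := toU_ne heu' hev' hne
    refine ⟨hii, hee, ?_⟩
    have hm1 : midProd A B φ ℓ u iu eu v iv ev (j+1) =
        gen A B φ (Sum.inr (iu (ℓ-j-1))) ^ eu (ℓ-j-1) *
          ofHom A B φ (u (ℓ-j) * c' * v j) *
          gen A B φ (Sum.inr (iv j)) ^ ev j := by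
      have hL1 : midL A B φ u iu eu (ℓ-(j+1)) (j+1) =
          midL A B φ u iu eu (ℓ-j-1) 1 * midL A B φ u iu eu (ℓ-j) j := by
        have h0 : midL A B φ u iu eu (ℓ-(j+1)) (j+1) =
            midL A B φ u iu eu (ℓ-j-1) (1+j) := by
          rw [show ℓ-(j+1) = ℓ-j-1 from by omega, show (1:ℕ)+j = j+1 from by omega]
        rw [h0, midL_append, hb2]
      have hR1 : midR A B φ v iv ev 0 (j+1) =
          midR A B φ v iv ev 0 j * midR A B φ v iv ev j 1 := by
        rw [midR_append, show (0:ℕ)+j = j from by omega]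
      rw [midProd_eq, hL1, hR1, midL_one, midR_one, hb2, h3']
      simp only [map_mul, ← ofHom_apply]
      group
    have hTε : T A B φ (iu (ℓ-j-1), toU (eu (ℓ-j-1))) =
        gen A B φ (Sum.inr (iu (ℓ-j-1))) ^ eu (ℓ-j-1) := T_eq A B φ _ heu'
    have hTv : gen A B φ (Sum.inr (iv j)) ^ ev j =
        (T A B φ (iu (ℓ-j-1), toU (eu (ℓ-j-1))))⁻¹ := by
      rw [hTε, ← hii, show ev j = -(eu (ℓ-j-1)) from by omega, zpow_neg]
    have hrel : T A B φ (iu (ℓ-j-1), toU (eu (ℓ-j-1))) *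
        ofHom A B φ (u (ℓ-j) * c' * v j) =
        ofHom A B φ ((toEquiv A B φ (iu (ℓ-j-1), toU (eu (ℓ-j-1))) ⟨u (ℓ-j) * c' * v j, hmem⟩ :
          toSub A B (nneg (iu (ℓ-j-1), toU (eu (ℓ-j-1))))) : H) *
          T A B φ (iu (ℓ-j-1), toU (eu (ℓ-j-1))) :=
      T_mul_of A B φ _ ⟨u (ℓ-j) * c' * v j, hmem⟩
    refine ⟨((toEquiv A B φ (iu (ℓ-j-1), toU (eu (ℓ-j-1))) ⟨u (ℓ-j) * c' * v j, hmem⟩ :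
        toSub A B (nneg (iu (ℓ-j-1), toU (eu (ℓ-j-1))))) : H), ?_, ?_⟩
    · have hmm := (toEquiv A B φ (iu (ℓ-j-1), toU (eu (ℓ-j-1)))
        ⟨u (ℓ-j) * c' * v j, hmem⟩).2
      rw [← hii, ← hee, ← toSub_nneg_toU A B _ heu']
      exact hmm
    · rw [hm1, ← hTε, hTv, hrel, mul_inv_cancel_right, ofHom_apply]
end MHNNL
end Stage5

/-- If for some `1 ≤ k ≤ min(ℓ,m)` the middle word represents an element of
`A_{i_{ℓ−k+1}}(α_{ℓ−k+1}) = A_{j_k}(−β_k)` in `G`, then the same holds for every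
`1 ≤ k' ≤ k`. -/
theorem cancel_monotone {H : Type*} [Group H] {ι : Type*}
    (A B : ι → Subgroup H) (φ : ∀ i, A i ≃* B i)
    (ℓ m : ℕ) (u v : ℕ → H) (iu iv : ℕ → ι) (eu ev : ℕ → ℤ)
    (hu : ReducedWord A B ℓ u iu eu) (hv : ReducedWord A B m v iv ev)
    (k : ℕ) (hk1 : 1 ≤ k) (hkl : k ≤ ℓ) (hkm : k ≤ m)
    (hside : side A B (iu (ℓ - k)) (eu (ℓ - k)) = side A B (iv (k - 1)) (-(ev (k - 1))))
    (hmem : ∃ c ∈ side A B (iv (k - 1)) (-(ev (k - 1))),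
        midProd A B φ ℓ u iu eu v iv ev k = gen A B φ (Sum.inl c)) :
    ∀ k', 1 ≤ k' → k' ≤ k →
      side A B (iu (ℓ - k')) (eu (ℓ - k')) = side A B (iv (k' - 1)) (-(ev (k' - 1))) ∧
      ∃ c ∈ side A B (iv (k' - 1)) (-(ev (k' - 1))),
        midProd A B φ ℓ u iu eu v iv ev k' = gen A B φ (Sum.inl c) := by
  
  obtain ⟨c, hcmem, hceq⟩ := hmem
  have main : ∀ j, j ≤ k → ∃ c' : H,
      midProd A B φ ℓ u iu eu v iv ev j = gen A B φ (Sum.inl c') ∧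
      (1 ≤ j →
        side A B (iu (ℓ - j)) (eu (ℓ - j)) = side A B (iv (j-1)) (-(ev (j-1))) ∧
        c' ∈ side A B (iv (j-1)) (-(ev (j-1)))) := by
    intro j
    induction j with
    | zero =>
      intro _
      refine ⟨1, ?_, fun h => absurd h (by omega)⟩
      have h0 : midProd A B φ ℓ u iu eu v iv ev 0 = 1 := by
        simp [midProd]
      rw [h0, ← MHNNL.ofHom_apply, map_one]
    | succ j ih =>
      intro hjk
      obtain ⟨c', hc', -⟩ := ih (by omega)
      have hceq' : midProd A B φ ℓ u iu eu v iv ev (j+1+(k-j-1)) = gen A B φ (Sum.inl c) := by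
        rw [show j+1+(k-j-1) = k from by omega]
        exact hceq
      obtain ⟨hii, hee, c'', hc''mem, hc''eq⟩ :=
        MHNNL.step A B φ ℓ m u v iu iv eu ev hu hv j (k-j-1) (by omega) (by omega)
          c hceq' c' hc'
      refine ⟨c'', hc''eq, fun _ => ⟨?_, ?_⟩⟩
      · rw [show ℓ-(j+1) = ℓ-j-1 from by omega, show j+1-1 = j from by omega, hii, hee]
      · rw [show j+1-1 = j from by omega]
        exact hc''mem
  intro k' hk'1 hk'k
  obtain ⟨c', hc', hcond⟩ := main k' hk'k
  obtain ⟨hside', hmem'⟩ := hcond hk'1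
  exact ⟨hside', c', hmem', hc'⟩
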